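/- Let G be a finite group admitting an ordered chain of subgroups {e} = H_0 < H_1 < ... < H_ℓ = G such that each interval [H_i, H_{i+1}] in the subgroup lattice of H_{i+1} is a distributive lattice. Then G admits a faithful finite-dimensional complex representation that is a direct sum of at most ℓ irreducible representations. (Equivalently, the minimal number of irreducible components of a faithful complex representation of G is at most the minimal length ℓ of such a chain.) -/

import Mathlib

/-- A representation is irreducible if the space is nontrivial and the only invariant
subspaces are `⊥` and `⊤`. -/
def IsIrredRep {G : Type*} [Group G] {V : Type*} [AddCommGroup V] [Module ℂ V]
    (ρ : Representation ℂ G V) : Prop :=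
  Nontrivial V ∧ ∀ p : Submodule ℂ V, (∀ g : G, ∀ v ∈ p, ρ g v ∈ p) → p = ⊥ ∨ p = ⊤

/-- The representation of `G` on the direct sum (product) of a family of
representation spaces. -/
def piRep {G : Type*} [Group G] {ι : Type*} {V : ι → Type*}
    [∀ i, AddCommGroup (V i)] [∀ i, Module ℂ (V i)]
    (ρ : ∀ i, Representation ℂ G (V i)) : Representation ℂ G (∀ i, V i) where
  toFun g := LinearMap.pi fun i => (ρ i g).comp (LinearMap.proj i)
  map_one' := by ext v i; simp
  map_mul' := by intro g h; ext v i; simp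

namespace DC
open Module

variable {Γ : Type} [Group Γ] {V : Type} [AddCommGroup V] [Module ℂ V]

/-- invariance of a submodule under a representation -/
def IsInv (ρ : Representation ℂ Γ V) (p : Submodule ℂ V) : Prop :=
  ∀ g : Γ, ∀ v ∈ p, ρ g v ∈ p

/-- restriction of a representation to an invariant submodule -/
def resRep (ρ : Representation ℂ Γ V) (p : Submodule ℂ V) (hp : IsInv ρ p) :
    Representation ℂ Γ p where
  toFun g := (ρ g).restrict (fun v hv => hp g v hv)
  map_one' := by
    ext v
    simp [LinearMap.restrict_apply]
  map_mul' g h := by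
    ext v
    simp [LinearMap.restrict_apply]

@[simp] lemma resRep_apply (ρ : Representation ℂ Γ V) (p : Submodule ℂ V) (hp : IsInv ρ p)
    (g : Γ) (v : p) : (resRep ρ p hp g v : V) = ρ g (v : V) := rfl

/-- the permutation representation on finitely supported functions -/
noncomputable def finRep (k G H : Type) [CommSemiring k] [Monoid G] [MulAction G H] :
    Representation k G (H →₀ k) where
  toFun g := Finsupp.lmapDomain k k (g • ·)
  map_one' := by
    ext x y
    simp
  map_mul' g h := by
    ext x y
    simp [mul_smul]

lemma finRep_def (k G H : Type) [CommSemiring k] [Monoid G] [MulAction G H] (g : G) :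
    finRep k G H g = Finsupp.lmapDomain k k (g • ·) := rfl

lemma finRep_apply (k G H : Type) [CommSemiring k] [Group G] [MulAction G H] (g : G)
    (f : H →₀ k) (x : H) : finRep k G H g f x = f (g⁻¹ • x) := by
  rw [finRep_def, Finsupp.lmapDomain_apply]
  conv_lhs => rw [show x = g • (g⁻¹ • x) by simp]
  exact Finsupp.mapDomain_apply (MulAction.injective g) f _

/-- "no nonzero fixed vector for elements satisfying P" -/
def NFon (ρ : Representation ℂ Γ V) (P : Γ → Prop) : Prop :=
  ∀ v : V, v ≠ 0 → ∃ g, P g ∧ ρ g v ≠ v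

lemma NFon.pullback {W : Type} [AddCommGroup W] [Module ℂ W]
    {ρ : Representation ℂ Γ V} {ρ' : Representation ℂ Γ W} {P : Γ → Prop}
    (f : W →ₗ[ℂ] V) (hinj : Function.Injective f)
    (hequiv : ∀ g w, f (ρ' g w) = ρ g (f w)) (h : NFon ρ P) : NFon ρ' P := by
  intro w hw
  obtain ⟨g, hP, hg⟩ := h (f w) (fun h0 => hw (hinj (by simpa using h0)))
  exact ⟨g, hP, fun he => hg (by rw [← hequiv, he])⟩

lemma NFon_res {ρ : Representation ℂ Γ V} {P : Γ → Prop} (p : Submodule ℂ V)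
    (hp : IsInv ρ p) (h : NFon ρ P) : NFon (resRep ρ p hp) P :=
  NFon.pullback p.subtype (Subtype.coe_injective) (fun _ _ => rfl) h

lemma exists_minimal_inv [FiniteDimensional ℂ V] (ρ : Representation ℂ Γ V)
    (P0 : Submodule ℂ V) (hinv : IsInv ρ P0) (h0 : P0 ≠ ⊥) :
    ∃ p, IsInv ρ p ∧ p ≠ ⊥ ∧ p ≤ P0 ∧
      ∀ q, IsInv ρ q → q ≠ ⊥ → q ≤ p → q = p := by
  classical
  set S : Set (Submodule ℂ V) := {p | IsInv ρ p ∧ p ≠ ⊥ ∧ p ≤ P0} with hS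
  have hne : (Set.range fun p : S => finrank ℂ (p : Submodule ℂ V)).Nonempty :=
    ⟨finrank ℂ P0, ⟨⟨P0, hinv, h0, le_rfl⟩, rfl⟩⟩
  obtain ⟨⟨p, hp1, hp2, hp3⟩, hpmin⟩ := Nat.sInf_mem hne
  refine ⟨p, hp1, hp2, hp3, fun q hq1 hq2 hq3 => ?_⟩
  have h2 : sInf (Set.range fun p : S => finrank ℂ (p : Submodule ℂ V)) ≤ finrank ℂ q :=
    Nat.sInf_le ⟨⟨q, hq1, hq2, hq3.trans hp3⟩, rfl⟩
  have h1 : finrank ℂ p ≤ finrank ℂ q := le_trans (le_of_eq hpmin) h2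
  exact Submodule.eq_of_le_of_finrank_le hq3 h1

lemma nontrivial_of_ne_bot {p : Submodule ℂ V} (h : p ≠ ⊥) : Nontrivial p :=
  Submodule.nontrivial_iff_ne_bot.mpr h

/-- a minimal invariant subspace gives an irreducible restricted representation -/
lemma isIrred_res (ρ : Representation ℂ Γ V) (p : Submodule ℂ V) (hp : IsInv ρ p)
    (hne : p ≠ ⊥) (hmin : ∀ q, IsInv ρ q → q ≠ ⊥ → q ≤ p → q = p) :
    Nontrivial p ∧ ∀ q : Submodule ℂ p, (∀ g : Γ, ∀ v ∈ q, resRep ρ p hp g v ∈ q) →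
      q = ⊥ ∨ q = ⊤ := by
  refine ⟨nontrivial_of_ne_bot hne, fun q hq => ?_⟩
  by_cases hqbot : q = ⊥
  · exact Or.inl hqbot
  · right
    set q' : Submodule ℂ V := q.map p.subtype with hq'
    have hinj := Submodule.map_injective_of_injective (f := p.subtype) p.injective_subtype
    have hq'le : q' ≤ p := by
      rintro v ⟨w, _, rfl⟩; exact w.2
    have hq'inv : IsInv ρ q' := by
      rintro g v ⟨w, hw, rfl⟩
      exact ⟨resRep ρ p hp g w, hq g w hw, rfl⟩
    have hq'ne : q' ≠ ⊥ := fun hb => hqbot (hinj (by rw [Submodule.map_bot]; exact hb))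
    have hqp := hmin q' hq'inv hq'ne hq'le
    have hmap : q.map p.subtype = (⊤ : Submodule ℂ p).map p.subtype := by
      rw [Submodule.map_top, Submodule.range_subtype, ← hq']; exact hqp
    exact hinj hmap

/-- Maschke: invariant complement -/
lemma maschke [Finite Γ] (ρ : Representation ℂ Γ V) (p : Submodule ℂ V) (hp : IsInv ρ p) :
    ∃ q, IsInv ρ q ∧ IsCompl p q := by
  classical
  have : Fintype Γ := Fintype.ofFinite Γ
  obtain ⟨c, hc⟩ := Submodule.exists_isCompl p
  set π₀ : V →ₗ[ℂ] V := p.subtype ∘ₗ Submodule.linearProjOfIsCompl p c hc with hπ₀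
  have hπ₀mem : ∀ v, π₀ v ∈ p := fun v => (Submodule.linearProjOfIsCompl p c hc v).2
  have hπ₀id : ∀ v ∈ p, π₀ v = v := by
    intro v hv
    have h5 : Submodule.linearProjOfIsCompl p c hc v = ⟨v, hv⟩ :=
      Submodule.linearProjOfIsCompl_apply_left hc ⟨v, hv⟩
    simp [hπ₀, h5]
  have hcard0 : (Fintype.card Γ : ℂ) ≠ 0 := Nat.cast_ne_zero.mpr Fintype.card_ne_zero
  set π : V →ₗ[ℂ] V := (Fintype.card Γ : ℂ)⁻¹ • (∑ g : Γ, (ρ g) ∘ₗ π₀ ∘ₗ (ρ g⁻¹)) with hπ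
  have hπapp : ∀ v, π v = (Fintype.card Γ : ℂ)⁻¹ • ∑ g : Γ, ρ g (π₀ (ρ g⁻¹ v)) := by
    intro v
    simp [hπ, LinearMap.sum_apply]
  have hπmem : ∀ v, π v ∈ p := by
    intro v
    rw [hπapp]
    exact Submodule.smul_mem _ _ (Submodule.sum_mem _ (fun g _ => hp g _ (hπ₀mem _)))
  have hcancel : ∀ (a b : Γ) (v : V), ρ a (ρ b v) = ρ (a * b) v := by
    intro a b v; rw [map_mul]; rfl
  have hπid : ∀ v ∈ p, π v = v := by
    intro v hv
    rw [hπapp]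
    have hgg : ∀ g : Γ, ρ g (π₀ (ρ g⁻¹ v)) = v := by
      intro g
      rw [hπ₀id _ (hp g⁻¹ v hv), hcancel, mul_inv_cancel, map_one]
      rfl
    rw [Finset.sum_congr rfl (fun g _ => hgg g), Finset.sum_const, Finset.card_univ,
      ← Nat.cast_smul_eq_nsmul ℂ, ← mul_smul, inv_mul_cancel₀ hcard0, one_smul]
  have hπequiv : ∀ h : Γ, ∀ v, π (ρ h v) = ρ h (π v) := by
    intro h v
    rw [hπapp, hπapp, map_smul, map_sum]
    congr 1
    rw [← Equiv.sum_comp (Equiv.mulLeft h) (fun g => ρ g (π₀ (ρ g⁻¹ (ρ h v))))]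
    apply Finset.sum_congr rfl
    intro g _
    simp only [Equiv.coe_mulLeft]
    have h4 : ρ (h * g)⁻¹ (ρ h v) = ρ g⁻¹ v := by
      rw [hcancel]
      congr 1
      group
    rw [h4, hcancel]
  refine ⟨LinearMap.ker π, ?_, ?_⟩
  · intro g v hv
    simp only [LinearMap.mem_ker] at hv ⊢
    rw [hπequiv, hv, map_zero]
  · constructor
    · rw [disjoint_iff_inf_le]
      rintro v ⟨hv1, hv2⟩
      have hv2' : π v = 0 := hv2
      have h7 := hπid v hv1
      rw [hv2'] at h7
      simpa [Submodule.mem_bot] using h7.symm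
    · rw [codisjoint_iff_le_sup]
      intro v _
      have h1 : π v ∈ p := hπmem v
      have h2 : v - π v ∈ LinearMap.ker π := by
        simp only [LinearMap.mem_ker, map_sub]
        rw [hπid _ h1, sub_self]
      have : v = π v + (v - π v) := by abel
      rw [this]
      exact Submodule.add_mem_sup h1 h2

section Tensor
open TensorProduct Module

variable {A B : Type} [AddCommGroup A] [Module ℂ A] [AddCommGroup B] [Module ℂ B]
variable [FiniteDimensional ℂ A] [FiniteDimensional ℂ B]

lemma exists_coord_right (p : A ⊗[ℂ] B) (hp : p ≠ 0) :
    ∃ (π : A ⊗[ℂ] B →ₗ[ℂ] B), π p ≠ 0 ∧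
      ∀ (f : B →ₗ[ℂ] B), π ((TensorProduct.map LinearMap.id f) p) = f (π p) := by
  classical
  set bA := Module.finBasis ℂ A with hbA
  set bB := Module.finBasis ℂ B with hbB
  set bT := bA.tensorProduct bB with hbT
  have hex : ∃ ij, bT.repr p ij ≠ 0 := by
    by_contra hall
    push_neg at hall
    apply hp
    have : bT.repr p = 0 := Finsupp.ext (fun ij => hall ij)
    have h2 := congrArg bT.repr.symm this
    simpa using h2
  obtain ⟨⟨i, j⟩, hij⟩ := hex
  set π : A ⊗[ℂ] B →ₗ[ℂ] B :=
    (TensorProduct.lid ℂ B).toLinearMap ∘ₗ (TensorProduct.map (bA.coord i) LinearMap.id) with hπ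
  have hcoord : ∀ j' : Fin (finrank ℂ B), bB.coord j' ∘ₗ π = bT.coord (i, j') := by
    intro j'
    apply bT.ext
    rintro ⟨a, b⟩
    have h1 : bT (a, b) = bA a ⊗ₜ[ℂ] bB b := Basis.tensorProduct_apply bA bB a b
    rw [h1]
    simp only [hπ, LinearMap.comp_apply, TensorProduct.map_tmul, LinearMap.id_apply,
      LinearEquiv.coe_toLinearMap, TensorProduct.lid_tmul, Basis.coord_apply, Basis.repr_self,
      map_smul]
    rw [← h1, Basis.repr_self]
    simp only [Finsupp.single_apply, Prod.ext_iff]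
    by_cases hai : a = i <;> by_cases hbj : b = j' <;> simp [hai, hbj]
  refine ⟨π, ?_, ?_⟩
  · intro h0
    have := congrArg (bB.coord j) h0
    rw [show bB.coord j (π p) = (bB.coord j ∘ₗ π) p from rfl] at this
    rw [hcoord j] at this
    exact hij (by simpa using this)
  · intro f
    have : π ∘ₗ (TensorProduct.map LinearMap.id f) = f ∘ₗ π := by
      apply TensorProduct.ext'
      intro a b
      simp [hπ, TensorProduct.lid_tmul]
    exact LinearMap.congr_fun this p

lemma exists_coord_left (p : A ⊗[ℂ] B) (hp : p ≠ 0) :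
    ∃ (π : A ⊗[ℂ] B →ₗ[ℂ] A), π p ≠ 0 ∧
      ∀ (f : A →ₗ[ℂ] A), π ((TensorProduct.map f LinearMap.id) p) = f (π p) := by
  classical
  set bA := Module.finBasis ℂ A with hbA
  set bB := Module.finBasis ℂ B with hbB
  set bT := bA.tensorProduct bB with hbT
  have hex : ∃ ij, bT.repr p ij ≠ 0 := by
    by_contra hall
    push_neg at hall
    apply hp
    have : bT.repr p = 0 := Finsupp.ext (fun ij => hall ij)
    have h2 := congrArg bT.repr.symm this
    simpa using h2
  obtain ⟨⟨i, j⟩, hij⟩ := hex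
  set π : A ⊗[ℂ] B →ₗ[ℂ] A :=
    (TensorProduct.rid ℂ A).toLinearMap ∘ₗ (TensorProduct.map LinearMap.id (bB.coord j)) with hπ
  have hcoord : ∀ i' : Fin (finrank ℂ A), bA.coord i' ∘ₗ π = bT.coord (i', j) := by
    intro i'
    apply bT.ext
    rintro ⟨a, b⟩
    have h1 : bT (a, b) = bA a ⊗ₜ[ℂ] bB b := Basis.tensorProduct_apply bA bB a b
    rw [h1]
    simp only [hπ, LinearMap.comp_apply, TensorProduct.map_tmul, LinearMap.id_apply,
      LinearEquiv.coe_toLinearMap, TensorProduct.rid_tmul, Basis.coord_apply, Basis.repr_self,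
      map_smul]
    rw [← h1, Basis.repr_self]
    simp only [Finsupp.single_apply, Prod.ext_iff]
    by_cases hai : a = i' <;> by_cases hbj : b = j <;> simp [hai, hbj]
  refine ⟨π, ?_, ?_⟩
  · intro h0
    have := congrArg (bA.coord i) h0
    rw [show bA.coord i (π p) = (bA.coord i ∘ₗ π) p from rfl] at this
    rw [hcoord i] at this
    exact hij (by simpa using this)
  · intro f
    have : π ∘ₗ (TensorProduct.map f LinearMap.id) = f ∘ₗ π := by
      apply TensorProduct.ext'
      intro a b
      simp [hπ, TensorProduct.rid_tmul]
    exact LinearMap.congr_fun this p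

end Tensor

section Groups

variable {G : Type} [Group G]

/-- `X` is invariant under conjugation by elements of `Hs` -/
def Cinv (Hs X : Subgroup G) : Prop := ∀ h ∈ Hs, ∀ x ∈ X, h * x * h⁻¹ ∈ X

/-- `M` is a normal subgroup of `K` (as subgroups of `G`) -/
def IsNormalIn (K M : Subgroup G) : Prop :=
  M ≤ K ∧ ∀ k ∈ K, ∀ m ∈ M, k * m * k⁻¹ ∈ M

lemma IsNormalIn.cinv {K Hs M : Subgroup G} (h : IsNormalIn K M) (hHs : Hs ≤ K) :
    Cinv Hs M := fun g hg => h.2 g (hHs hg)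

lemma IsNormalIn.inf {K M M' : Subgroup G} (h : IsNormalIn K M) (h' : IsNormalIn K M') :
    IsNormalIn K (M ⊓ M') :=
  ⟨inf_le_left.trans h.1, fun k hk m hm => ⟨h.2 k hk m hm.1, h'.2 k hk m hm.2⟩⟩

lemma Cinv.inf {Hs X Y : Subgroup G} (hX : Cinv Hs X) (hY : Cinv Hs Y) :
    Cinv Hs (X ⊓ Y) := fun h hh x hx => ⟨hX h hh x hx.1, hY h hh x hx.2⟩

lemma sup_eq_closure_union (X Y : Subgroup G) :
    X ⊔ Y = Subgroup.closure ((X : Set G) ∪ (Y : Set G)) := by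
  rw [Subgroup.closure_union, X.closure_eq, Y.closure_eq]

lemma Cinv.sup {Hs X Y : Subgroup G} (hX : Cinv Hs X) (hY : Cinv Hs Y) :
    Cinv Hs (X ⊔ Y) := by
  intro h hh x hx
  rw [sup_eq_closure_union] at hx ⊢
  induction hx using Subgroup.closure_induction with
  | mem y hy =>
    rcases hy with hy | hy
    · exact Subgroup.subset_closure (Or.inl (hX h hh y hy))
    · exact Subgroup.subset_closure (Or.inr (hY h hh y hy))
  | one => simpa using Subgroup.one_mem _
  | mul y z _ _ hy hz =>
    have : h * (y * z) * h⁻¹ = (h * y * h⁻¹) * (h * z * h⁻¹) := by group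
    rw [this]; exact Subgroup.mul_mem _ hy hz
  | inv y _ hy =>
    have : h * y⁻¹ * h⁻¹ = (h * y * h⁻¹)⁻¹ := by group
    rw [this]; exact Subgroup.inv_mem _ hy

/-- membership in a join `Hs ⊔ X` when `X` is `Hs`-invariant -/
lemma mem_sup_of_cinv {Hs X : Subgroup G} (hX : Cinv Hs X) :
    ∀ g ∈ Hs ⊔ X, ∃ h ∈ Hs, ∃ x ∈ X, g = h * x := by
  classical
  set P : Subgroup G :=
    { carrier := {g | ∃ h ∈ Hs, ∃ x ∈ X, g = h * x}
      one_mem' := ⟨1, Hs.one_mem, 1, X.one_mem, by group⟩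
      mul_mem' := by
        rintro a b ⟨h1, hh1, x1, hx1, rfl⟩ ⟨h2, hh2, x2, hx2, rfl⟩
        refine ⟨h1 * h2, Hs.mul_mem hh1 hh2, (h2⁻¹ * x1 * h2) * x2,
          X.mul_mem (by simpa using hX h2⁻¹ (Hs.inv_mem hh2) x1 hx1) hx2, by group⟩
      inv_mem' := by
        rintro a ⟨h, hh, x, hx, rfl⟩
        refine ⟨h⁻¹, Hs.inv_mem hh, h * x⁻¹ * h⁻¹, hX h hh x⁻¹ (X.inv_mem hx), by group⟩ } with hP
  intro g hg
  have hle : Hs ⊔ X ≤ P := by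
    apply sup_le
    · intro h hh; exact ⟨h, hh, 1, X.one_mem, by group⟩
    · intro x hx; exact ⟨1, Hs.one_mem, x, hx, by group⟩
  exact hle hg

/-- membership in a join of elementwise commuting subgroups -/
lemma mem_sup_of_commute {A B : Subgroup G}
    (hc : ∀ a ∈ A, ∀ b ∈ B, a * b = b * a) :
    ∀ g ∈ A ⊔ B, ∃ a ∈ A, ∃ b ∈ B, g = a * b := by
  classical
  set P : Subgroup G :=
    { carrier := {g | ∃ a ∈ A, ∃ b ∈ B, g = a * b}
      one_mem' := ⟨1, A.one_mem, 1, B.one_mem, by group⟩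
      mul_mem' := by
        rintro x y ⟨a1, ha1, b1, hb1, rfl⟩ ⟨a2, ha2, b2, hb2, rfl⟩
        refine ⟨a1 * a2, A.mul_mem ha1 ha2, b1 * b2, B.mul_mem hb1 hb2, ?_⟩
        have := hc a2 ha2 b1 hb1
        calc a1 * b1 * (a2 * b2) = a1 * (b1 * a2) * b2 := by group
          _ = a1 * (a2 * b1) * b2 := by rw [← this]
          _ = a1 * a2 * (b1 * b2) := by group
      inv_mem' := by
        rintro x ⟨a, ha, b, hb, rfl⟩
        refine ⟨a⁻¹, A.inv_mem ha, b⁻¹, B.inv_mem hb, ?_⟩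
        have := hc a⁻¹ (A.inv_mem ha) b⁻¹ (B.inv_mem hb)
        rw [mul_inv_rev, this] } with hP
  intro g hg
  have hle : A ⊔ B ≤ P := by
    apply sup_le
    · intro a ha; exact ⟨a, ha, 1, B.one_mem, by group⟩
    · intro b hb; exact ⟨1, A.one_mem, b, hb, by group⟩
  exact hle hg

variable {K Hs N₀ : Subgroup G}

/-- key meet computation: `(Hs ⊔ X) ⊓ (Hs ⊔ Y) = Hs ⊔ (X ⊓ Y)` -/
lemma sup_inf_sup (hdisj : Hs ⊓ N₀ = ⊥) {X Y : Subgroup G}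
    (hXle : X ≤ N₀) (hYle : Y ≤ N₀) (hX : Cinv Hs X) (hY : Cinv Hs Y) :
    (Hs ⊔ X) ⊓ (Hs ⊔ Y) = Hs ⊔ (X ⊓ Y) := by
  apply le_antisymm
  · rintro g ⟨hg1, hg2⟩
    obtain ⟨h, hh, x, hx, rfl⟩ := mem_sup_of_cinv hX g hg1
    obtain ⟨h', hh', y, hy, he⟩ := mem_sup_of_cinv hY _ hg2
    have hxy : h'⁻¹ * h = y * x⁻¹ := by
      have : h' * y = h * x := he.symm
      calc h'⁻¹ * h = h'⁻¹ * (h * x) * x⁻¹ := by group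
        _ = h'⁻¹ * (h' * y) * x⁻¹ := by rw [← this]
        _ = y * x⁻¹ := by group
    have hmem : h'⁻¹ * h ∈ Hs ⊓ N₀ := by
      constructor
      · exact Hs.mul_mem (Hs.inv_mem hh') hh
      · rw [hxy]; exact N₀.mul_mem (hYle hy) (N₀.inv_mem (hXle hx))
    rw [hdisj] at hmem
    have h1 : h'⁻¹ * h = 1 := hmem
    have hxeqy : x = y := by
      have h2 : y * x⁻¹ = 1 := by rw [← hxy]; exact h1
      have := mul_eq_one_iff_eq_inv.mp h2
      rw [this]; group
    exact Subgroup.mul_mem _ (Subgroup.mem_sup_left hh)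
      (Subgroup.mem_sup_right ⟨hx, hxeqy ▸ hy⟩)
  · apply sup_le
    · exact le_inf (le_sup_left) (le_sup_left)
    · exact le_inf ((inf_le_left.trans (le_sup_right))) ((inf_le_right.trans (le_sup_right)))

end Groups

section Groups2

variable {G : Type} [Group G] {K Hs N₀ : Subgroup G}

lemma sup_cancel (hdisj : Hs ⊓ N₀ = ⊥) {A B : Subgroup G} (hA : A ≤ N₀) (hB : B ≤ N₀)
    (hBinv : Cinv Hs B) (h : Hs ⊔ A ≤ Hs ⊔ B) : A ≤ B := by
  intro a ha
  have hmem0 : a ∈ Hs ⊔ B := h (Subgroup.mem_sup_right ha)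
  obtain ⟨h', hh', b, hb, he⟩ := mem_sup_of_cinv hBinv a hmem0
  have hmem : h' ∈ Hs ⊓ N₀ := by
    refine ⟨hh', ?_⟩
    have h2 : h' = a * b⁻¹ := by rw [he]; group
    rw [h2]; exact N₀.mul_mem (hA ha) (N₀.inv_mem (hB hb))
  rw [hdisj] at hmem
  have h3 : h' = 1 := hmem
  rw [he, h3, one_mul]; exact hb

lemma cinv_bot : Cinv Hs (⊥ : Subgroup G) := by
  intro h hh x hx
  simp only [Subgroup.mem_bot] at hx ⊢
  rw [hx]; group

lemma cinv_distrib (hHsK : Hs ≤ K) (hN₀K : N₀ ≤ K) (hdisj : Hs ⊓ N₀ = ⊥)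
    (hdist : ∀ x y z : Subgroup G, Hs ≤ x → x ≤ K → Hs ≤ y → y ≤ K → Hs ≤ z → z ≤ K →
      x ⊓ (y ⊔ z) = (x ⊓ y) ⊔ (x ⊓ z))
    {X Y Z : Subgroup G} (hXle : X ≤ N₀) (hYle : Y ≤ N₀) (hZle : Z ≤ N₀)
    (hX : Cinv Hs X) (hY : Cinv Hs Y) (hZ : Cinv Hs Z) :
    X ⊓ (Y ⊔ Z) = (X ⊓ Y) ⊔ (X ⊓ Z) := by
  have hYZle : Y ⊔ Z ≤ N₀ := sup_le hYle hZle
  have hYZ : Cinv Hs (Y ⊔ Z) := hY.sup hZ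
  have key : Hs ⊔ (X ⊓ (Y ⊔ Z)) = Hs ⊔ ((X ⊓ Y) ⊔ (X ⊓ Z)) := by
    rw [← sup_inf_sup hdisj hXle hYZle hX hYZ]
    rw [show Hs ⊔ (Y ⊔ Z) = (Hs ⊔ Y) ⊔ (Hs ⊔ Z) from sup_sup_distrib_left Hs Y Z]
    rw [hdist (Hs ⊔ X) (Hs ⊔ Y) (Hs ⊔ Z) le_sup_left (sup_le hHsK (hXle.trans hN₀K))
      le_sup_left (sup_le hHsK (hYle.trans hN₀K)) le_sup_left (sup_le hHsK (hZle.trans hN₀K))]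
    rw [sup_inf_sup hdisj hXle hYle hX hY, sup_inf_sup hdisj hXle hZle hX hZ]
    rw [← sup_sup_distrib_left Hs (X ⊓ Y) (X ⊓ Z)]
  apply le_antisymm
  · exact sup_cancel hdisj (inf_le_left.trans hXle)
      (sup_le (inf_le_left.trans hXle) (inf_le_left.trans hXle))
      ((hX.inf hY).sup (hX.inf hZ)) (le_of_eq key)
  · exact sup_cancel hdisj (sup_le (inf_le_left.trans hXle) (inf_le_left.trans hXle))
      (inf_le_left.trans hXle) (hX.inf hYZ) (le_of_eq key.symm)

lemma cinv_finset_sup (T : Finset (Subgroup G)) (h : ∀ M' ∈ T, Cinv Hs M') :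
    Cinv Hs (T.sup id) := by
  classical
  induction T using Finset.induction_on with
  | empty => simpa using cinv_bot
  | insert _ _ hnotin ih =>
    rw [Finset.sup_insert]
    exact (h _ (Finset.mem_insert_self _ _)).sup
      (ih (fun M' hM' => h M' (Finset.mem_insert_of_mem hM')))

lemma finset_indep (hHsK : Hs ≤ K) (hN₀K : N₀ ≤ K) (hdisj : Hs ⊓ N₀ = ⊥)
    (hdist : ∀ x y z : Subgroup G, Hs ≤ x → x ≤ K → Hs ≤ y → y ≤ K → Hs ≤ z → z ≤ K →
      x ⊓ (y ⊔ z) = (x ⊓ y) ⊔ (x ⊓ z))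
    (T : Finset (Subgroup G)) (M : Subgroup G) (hM : M ≤ N₀) (hMinv : Cinv Hs M)
    (hT : ∀ M' ∈ T, M' ≤ N₀ ∧ Cinv Hs M' ∧ M ⊓ M' = ⊥) :
    M ⊓ T.sup id = ⊥ := by
  classical
  induction T using Finset.induction_on with
  | empty => simp
  | @insert M' T hnotin ih =>
    rw [Finset.sup_insert]
    have hM' := hT M' (Finset.mem_insert_self _ _)
    have hTrest : ∀ M'' ∈ T, M'' ≤ N₀ ∧ Cinv Hs M'' ∧ M ⊓ M'' = ⊥ :=
      fun M'' hM'' => hT M'' (Finset.mem_insert_of_mem hM'')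
    have hsuple : T.sup id ≤ N₀ := Finset.sup_le (fun M'' hM'' => (hTrest M'' hM'').1)
    have hsupinv : Cinv Hs (T.sup id) := cinv_finset_sup T (fun M'' hM'' => (hTrest M'' hM'').2.1)
    rw [show (id M' : Subgroup G) = M' from rfl]
    rw [cinv_distrib hHsK hN₀K hdisj hdist hM hM'.1 hsuple hMinv hM'.2.1 hsupinv]
    rw [hM'.2.2, ih hTrest]
    simp

lemma commute_of_disjoint_normal {M M' : Subgroup G} (hM : IsNormalIn K M)
    (hM' : IsNormalIn K M') (hMM' : M ⊓ M' = ⊥) :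
    ∀ m ∈ M, ∀ m' ∈ M', m * m' = m' * m := by
  intro m hm m' hm'
  have hc1 : m * m' * m⁻¹ * m'⁻¹ ∈ M' := by
    have h1 : m * m' * m⁻¹ ∈ M' := hM'.2 m (hM.1 hm) m' hm'
    exact M'.mul_mem h1 (M'.inv_mem hm')
  have hc2 : m * m' * m⁻¹ * m'⁻¹ ∈ M := by
    have h1 : m' * m⁻¹ * m'⁻¹ ∈ M := hM.2 m' (hM'.1 hm') m⁻¹ (M.inv_mem hm)
    have h2 := M.mul_mem hm h1
    have h3 : m * (m' * m⁻¹ * m'⁻¹) = m * m' * m⁻¹ * m'⁻¹ := by group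
    rw [h3] at h2; exact h2
  have hmem : m * m' * m⁻¹ * m'⁻¹ ∈ M ⊓ M' := ⟨hc2, hc1⟩
  rw [hMM'] at hmem
  have h1 : m * m' * m⁻¹ * m'⁻¹ = 1 := hmem
  calc m * m' = (m * m' * m⁻¹ * m'⁻¹) * (m' * m) := by group
    _ = m' * m := by rw [h1]; group

lemma exists_minimal_normalin [Finite G] {D : Subgroup G}
    (hDn : IsNormalIn K D) (hDbot : D ≠ ⊥) :
    ∃ M, M ≤ D ∧ IsNormalIn K M ∧ M ≠ ⊥ ∧
      ∀ P, IsNormalIn K P → P ≠ ⊥ → P ≤ M → P = M := by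
  classical
  set S : Set (Subgroup G) := {P | P ≤ D ∧ IsNormalIn K P ∧ P ≠ ⊥} with hS
  have hSfin : S.Finite := Set.toFinite S
  have hSne : S.Nonempty := ⟨D, le_rfl, hDn, hDbot⟩
  obtain ⟨M, hMS, hmin⟩ : ∃ M ∈ S, ∀ P ∈ S, P ≤ M → M = P := by
    obtain ⟨M, hM⟩ := hSfin.exists_minimal hSne
    exact ⟨M, hM.1, fun P hP hle => (hM.eq_of_le hP hle).symm⟩
  exact ⟨M, hMS.1, hMS.2.1, hMS.2.2,
    fun P hP1 hP2 hP3 => (hmin P ⟨hP3.trans hMS.1, hP1, hP2⟩ hP3).symm⟩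

end Groups2

section Agg

/-- a bundled finite-dimensional complex representation -/
structure BRep (Γ : Type) [Group Γ] where
  carrier : Type
  [ab : AddCommGroup carrier]
  [mod : Module ℂ carrier]
  [fd : FiniteDimensional ℂ carrier]
  rep : Representation ℂ Γ carrier

attribute [instance] BRep.ab BRep.mod BRep.fd

/-- every nontrivial finite group has a f.d. representation with no nonzero fixed vector -/
lemma exists_NF_rep (Γ : Type) [Group Γ] [Finite Γ] (hne : Nontrivial Γ) :
    ∃ W : BRep Γ, Nontrivial W.carrier ∧ NFon W.rep (fun _ => True) := by
  classical
  have : Fintype Γ := Fintype.ofFinite Γ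
  set ρreg := finRep ℂ Γ Γ with hρreg
  set L : (Γ →₀ ℂ) →ₗ[ℂ] ℂ := Finsupp.linearCombination ℂ (fun _ => (1 : ℂ)) with hL
  have hLapp : ∀ f : Γ →₀ ℂ, L f = ∑ a : Γ, f a := by
    intro f
    rw [hL, Finsupp.linearCombination_apply, Finsupp.sum_fintype]
    · simp
    · intro a; simp
  have hinvL : ∀ (g : Γ) (f : Γ →₀ ℂ), L (ρreg g f) = L f := by
    intro g f
    rw [hρreg, finRep_def, Finsupp.lmapDomain_apply, hL,
      Finsupp.linearCombination_mapDomain]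
    rfl
  set Z := LinearMap.ker L with hZ
  have hZinv : IsInv ρreg Z := by
    intro g v hv
    simp only [hZ, LinearMap.mem_ker] at hv ⊢
    rw [hinvL, hv]
  obtain ⟨x, hx1⟩ := exists_ne (1 : Γ)
  have hvZ : Finsupp.single x (1:ℂ) - Finsupp.single 1 1 ∈ Z := by
    simp only [hZ, LinearMap.mem_ker, map_sub, hL]
    rw [Finsupp.linearCombination_single, Finsupp.linearCombination_single]
    simp
  have hvne : Finsupp.single x (1:ℂ) - Finsupp.single 1 1 ≠ 0 := by
    intro h0
    have h2 : ((Finsupp.single x (1:ℂ) - Finsupp.single 1 1) : Γ →₀ ℂ) x = 0 := by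
      rw [h0]; rfl
    rw [Finsupp.sub_apply, Finsupp.single_eq_same, Finsupp.single_apply,
      if_neg (fun h : (1:Γ) = x => hx1 h.symm)] at h2
    simp at h2
  refine ⟨⟨Z, resRep ρreg Z hZinv⟩, ?_, ?_⟩
  · exact ⟨⟨0, ⟨_, hvZ⟩, fun h => hvne (by simpa using congrArg Subtype.val h.symm)⟩⟩
  · intro v hv
    by_contra hall
    push_neg at hall
    have hfix : ∀ (g : Γ), ρreg g (v : Γ →₀ ℂ) = (v : Γ →₀ ℂ) := by
      intro g
      have := hall g trivial
      have h2 : resRep ρreg Z hZinv g v = v := this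
      exact congrArg Subtype.val h2
    have hconst : ∀ a : Γ, (v : Γ →₀ ℂ) a = (v : Γ →₀ ℂ) 1 := by
      intro a
      have h3 : (ρreg a (v : Γ →₀ ℂ)) a = (v : Γ →₀ ℂ) a := by rw [hfix a]
      rw [hρreg, finRep_apply] at h3
      simp only [smul_eq_mul, inv_mul_cancel] at h3
      rw [← h3]
    have hv1 : (v : Γ →₀ ℂ) 1 = 0 := by
      by_contra hc
      have hL0 : L (v : Γ →₀ ℂ) = 0 := v.2
      rw [hLapp] at hL0
      rw [Finset.sum_congr rfl (fun a _ => hconst a)] at hL0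
      simp only [Finset.sum_const, Finset.card_univ, nsmul_eq_mul] at hL0
      have hcard : (Fintype.card Γ : ℂ) ≠ 0 := Nat.cast_ne_zero.mpr Fintype.card_ne_zero
      exact hc (by
        rcases mul_eq_zero.mp hL0 with h | h
        · exact absurd h hcard
        · exact h)
    apply hv
    apply Subtype.ext
    ext a
    simp only [ZeroMemClass.coe_zero, Finsupp.coe_zero, Pi.zero_apply]
    rw [hconst a, hv1]

/-- aggregation of no-fixed-vector representations over a finite family of
pairwise commuting, independent subgroups -/
lemma agg {G : Type} [Group G] [Finite G] (T : Finset (Subgroup G))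
    (hbot : ∀ M ∈ T, M ≠ ⊥)
    (hcomm : ∀ M ∈ T, ∀ M' ∈ T, M ≠ M' → ∀ m ∈ M, ∀ m' ∈ M', m * m' = m' * m)
    (hindep : ∀ M ∈ T, ∀ T' ⊆ T, M ∉ T' → M ⊓ T'.sup id = ⊥) :
    ∃ W : BRep ↥(T.sup id : Subgroup G), Nontrivial W.carrier ∧
      ∀ M ∈ T, NFon W.rep (fun s => (s : G) ∈ M) := by
  classical
  induction T using Finset.induction_on with
  | empty =>
    refine ⟨⟨ℂ, 1⟩, inferInstance, ?_⟩
    intro M hM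
    simp at hM
  | @insert M T hMnotinT ih =>
    have hbotT : ∀ M' ∈ T, M' ≠ ⊥ := fun M' h => hbot M' (Finset.mem_insert_of_mem h)
    have hcommT : ∀ M' ∈ T, ∀ M'' ∈ T, M' ≠ M'' → ∀ m ∈ M', ∀ m' ∈ M'', m * m' = m' * m :=
      fun M' h M'' h' => hcomm M' (Finset.mem_insert_of_mem h) M'' (Finset.mem_insert_of_mem h')
    have hindepT : ∀ M' ∈ T, ∀ T' ⊆ T, M' ∉ T' → M' ⊓ T'.sup id = ⊥ :=
      fun M' h T' hT' => hindep M' (Finset.mem_insert_of_mem h)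
        T' (hT'.trans (Finset.subset_insert _ _))
    have hMT : M ∈ insert M T := Finset.mem_insert_self _ _
    have hMbot : M ≠ ⊥ := hbot M hMT
    have hMnt : Nontrivial ↥M := (Subgroup.nontrivial_iff_ne_bot M).mpr hMbot
    obtain ⟨Y, hYnt, hYNF⟩ := exists_NF_rep ↥M hMnt
    -- set up the groups
    set ST : Subgroup G := T.sup id with hST
    set S' : Subgroup G := (insert M T).sup id with hS'
    obtain ⟨W, hWnt, hWNF⟩ := ih hbotT hcommT hindepT
    have hS'eq : S' = M ⊔ ST := by rw [hS', Finset.sup_insert]; rfl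
    have hMleS' : M ≤ S' := by rw [hS'eq]; exact le_sup_left
    have hSTleS' : ST ≤ S' := by rw [hS'eq]; exact le_sup_right
    -- commutation between M and ST
    have hcommMST : ∀ m ∈ M, ∀ x ∈ ST, m * x = x * m := by
      intro m hm x hx
      have hcent : ST ≤ Subgroup.centralizer {m} := by
        rw [hST]
        apply Finset.sup_le
        intro M' hM'
        intro m' hm'
        rw [Subgroup.mem_centralizer_iff]
        intro h hh
        simp only [Set.mem_singleton_iff] at hh
        rw [hh]
        exact hcomm M hMT M' (Finset.mem_insert_of_mem hM')
          (fun hMeq => hMnotinT (hMeq ▸ hM')) m hm m' hm'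
      have := hcent hx
      rw [Subgroup.mem_centralizer_iff] at this
      exact this m (Set.mem_singleton m)
    have hdisjMST : M ⊓ ST = ⊥ := by
      rw [hST]
      exact hindep M hMT T (Finset.subset_insert _ _) hMnotinT
    -- the group isomorphism
    set ι₁ : ↥M →* ↥S' := Subgroup.inclusion hMleS' with hι₁
    set ι₂ : ↥ST →* ↥S' := Subgroup.inclusion hSTleS' with hι₂
    have hcommι : ∀ (a : ↥M) (b : ↥ST), Commute (ι₁ a) (ι₂ b) := by
      intro a b
      apply Subtype.ext
      exact hcommMST a a.2 b b.2
    set Φ : ↥M × ↥ST →* ↥S' := MonoidHom.noncommCoprod ι₁ ι₂ hcommι with hΦ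
    have hΦval : ∀ p : ↥M × ↥ST, ((Φ p : ↥S') : G) = (p.1 : G) * (p.2 : G) := by
      intro p
      rw [hΦ, MonoidHom.noncommCoprod_apply]
      rfl
    have hΦinj : Function.Injective Φ := by
      rw [injective_iff_map_eq_one]
      rintro ⟨a, b⟩ hab
      have h1 : (a : G) * (b : G) = 1 := by
        have := congrArg (Subtype.val) hab
        rw [hΦval] at this
        exact this
      have ha : (a : G) ∈ M ⊓ ST := by
        constructor
        · exact a.2
        · have h2 : (a : G) = (b : G)⁻¹ := by
            have h3 := congrArg (fun z => z * (b : G)⁻¹) h1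
            simpa [mul_assoc] using h3
          rw [h2]
          exact ST.inv_mem b.2
      rw [hdisjMST] at ha
      have ha1 : (a : G) = 1 := ha
      have hb1 : (b : G) = 1 := by
        rw [ha1, one_mul] at h1
        exact h1
      exact Prod.ext (Subtype.ext ha1) (Subtype.ext hb1)
    have hΦsurj : Function.Surjective Φ := by
      intro g
      have hg : (g : G) ∈ M ⊔ ST := by rw [← hS'eq]; exact g.2
      obtain ⟨a, ha, b, hb, he⟩ := mem_sup_of_commute hcommMST (g : G) hg
      refine ⟨(⟨a, ha⟩, ⟨b, hb⟩), ?_⟩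
      apply Subtype.ext
      rw [hΦval]
      exact he.symm
    set e : (↥M × ↥ST) ≃* ↥S' := MulEquiv.ofBijective Φ ⟨hΦinj, hΦsurj⟩ with he
    -- the tensor product representation
    set ρ₁ : Representation ℂ (↥M × ↥ST) Y.carrier := Y.rep.comp (MonoidHom.fst _ _) with hρ₁
    set ρ₂ : Representation ℂ (↥M × ↥ST) W.carrier := W.rep.comp (MonoidHom.snd _ _) with hρ₂
    set ρprod : Representation ℂ (↥M × ↥ST) (TensorProduct ℂ Y.carrier W.carrier) :=
      Representation.tprod ρ₁ ρ₂ with hρprod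
    set ρ' : Representation ℂ ↥S' (TensorProduct ℂ Y.carrier W.carrier) :=
      ρprod.comp e.symm.toMonoidHom with hρ'
    have hρ'apply : ∀ p : ↥M × ↥ST,
        ρ' (Φ p) = TensorProduct.map (Y.rep p.1) (W.rep p.2) := by
      intro p
      rw [hρ']
      have h1 : e.symm (Φ p) = p := by
        apply e.injective
        rw [MulEquiv.apply_symm_apply]
        rfl
      show ρprod (e.symm (Φ p)) = _
      rw [h1, hρprod, Representation.tprod_apply]
      rfl
    have hnt' : Nontrivial (TensorProduct ℂ Y.carrier W.carrier) := by
      rw [← Module.finrank_pos_iff (R := ℂ)]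
      rw [Module.finrank_tensorProduct]
      have h1 : 0 < Module.finrank ℂ Y.carrier := Module.finrank_pos_iff.mpr hYnt
      have h2 : 0 < Module.finrank ℂ W.carrier := Module.finrank_pos_iff.mpr hWnt
      positivity
    refine ⟨⟨TensorProduct ℂ Y.carrier W.carrier, ρ'⟩, hnt', ?_⟩
    intro M'' hM''
    rcases Finset.mem_insert.mp hM'' with hMM | hM''T
    · -- the new subgroup M
      rw [hMM]
      intro p hp
      by_contra hall
      push_neg at hall
      obtain ⟨π, hπne, hπcomm⟩ := exists_coord_left p hp
      obtain ⟨a, _, ha⟩ := hYNF (π p) hπne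
      apply ha
      have hfix : ρ' (Φ (a, 1)) p = p := by
        have hmem : ((Φ (a, 1) : ↥S') : G) ∈ M := by
          rw [hΦval]
          simpa using a.2
        exact hall (Φ (a, 1)) hmem
      rw [hρ'apply] at hfix
      rw [map_one] at hfix
      have hfix2 : TensorProduct.map (Y.rep a) LinearMap.id p = p := hfix
      have h9 := hπcomm (Y.rep a)
      rw [hfix2] at h9
      exact h9.symm
    · -- an old subgroup M'' ∈ T
      intro p hp
      by_contra hall
      push_neg at hall
      obtain ⟨π, hπne, hπcomm⟩ := exists_coord_right p hp
      obtain ⟨b, hbmem, hb⟩ := hWNF M'' hM''T (π p) hπne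
      apply hb
      have hfix : ρ' (Φ (1, b)) p = p := by
        have hmem : ((Φ (1, b) : ↥S') : G) ∈ M'' := by
          rw [hΦval]
          simpa using hbmem
        exact hall (Φ (1, b)) hmem
      rw [hρ'apply] at hfix
      rw [map_one] at hfix
      have hfix2 : TensorProduct.map LinearMap.id (W.rep b) p = p := hfix
      have h9 := hπcomm (W.rep b)
      rw [hfix2] at h9
      exact h9.symm

end Agg

section Constituent

open Module

variable {Γ : Type} [Group Γ] {V : Type} [AddCommGroup V] [Module ℂ V]

lemma exists_maximal_inv [FiniteDimensional ℂ V] (ρ : Representation ℂ Γ V)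
    (X : Submodule ℂ V) :
    ∃ C, (IsInv ρ C ∧ C ⊓ X = ⊥) ∧
      ∀ C', IsInv ρ C' → C' ⊓ X = ⊥ → C ≤ C' → C' = C := by
  classical
  set S : Set (Submodule ℂ V) := {C | IsInv ρ C ∧ C ⊓ X = ⊥} with hS
  have hSne : S.Nonempty := by
    refine ⟨⊥, ?_, by simp⟩
    intro g v hv
    simp only [Submodule.mem_bot] at hv ⊢
    rw [hv, map_zero]
  set R : Set ℕ := (fun C : Submodule ℂ V => finrank ℂ C) '' S with hR
  have hRne : R.Nonempty := hSne.image _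
  have hRbdd : BddAbove R := by
    refine ⟨finrank ℂ V, ?_⟩
    rintro n ⟨C, _, rfl⟩
    exact Submodule.finrank_le C
  obtain ⟨C, hCS, hCrank⟩ := Nat.sSup_mem hRne hRbdd
  refine ⟨C, hCS, fun C' hC'1 hC'2 hle => ?_⟩
  have h1 : finrank ℂ C' ≤ finrank ℂ C := by
    have h2 : finrank ℂ C' ∈ R := ⟨C', ⟨hC'1, hC'2⟩, rfl⟩
    have h3 : finrank ℂ C' ≤ sSup R := le_csSup hRbdd h2
    have h4 : finrank ℂ C = sSup R := hCrank
    rw [h4]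
    exact h3
  exact (Submodule.eq_of_le_of_finrank_le hle h1).symm

end Constituent

section Constituent2

open Module

variable {G : Type} [Group G] [Finite G]

/-- The key constituent lemma: given a subgroup `S` and a nontrivial f.d.
representation `X` of `S`, there is an irreducible representation `V` of `G` such
that for any predicate `P` valued in `S` for which `X` has no nonzero `P`-fixed
vector, also `V` is not `P`-trivial. -/
lemma constituent (S : Subgroup G) (X : BRep ↥S) (hXnt : Nontrivial X.carrier) :
    ∃ (W : BRep G), IsIrredRep W.rep ∧
      ∀ (P : G → Prop), (∀ g, P g → g ∈ S) →
        NFon X.rep (fun s : ↥S => P (s : G)) →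
        ∃ (v : W.carrier) (g : G), P g ∧ W.rep g v ≠ v := by
  classical
  have hFT : Fintype G := Fintype.ofFinite G
  have hfdG : FiniteDimensional ℂ (G →₀ ℂ) :=
    Module.Finite.equiv (Finsupp.linearEquivFunOnFinite ℂ ℂ G).symm
  have hfdS : FiniteDimensional ℂ (↥S →₀ ℂ) :=
    Module.Finite.equiv (Finsupp.linearEquivFunOnFinite ℂ ℂ ↥S).symm
  -- shrink X to an irreducible subrepresentation X₁
  have htopbot : (⊤ : Submodule ℂ X.carrier) ≠ ⊥ := by
    intro h
    obtain ⟨x, hx⟩ := exists_ne (0 : X.carrier)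
    have : x ∈ (⊥ : Submodule ℂ X.carrier) := h ▸ Submodule.mem_top
    exact hx (by simpa using this)
  have htopinv : IsInv X.rep ⊤ := fun g v _ => Submodule.mem_top
  obtain ⟨X₁, hX₁inv, hX₁ne, _, hX₁min⟩ := exists_minimal_inv X.rep ⊤ htopinv htopbot
  set ρ₁ : Representation ℂ ↥S X₁ := resRep X.rep X₁ hX₁inv with hρ₁
  have hX₁nt : Nontrivial X₁ := nontrivial_of_ne_bot hX₁ne
  obtain ⟨x₀, hx₀⟩ := exists_ne (0 : X₁)
  -- the regular representation of S and the surjection onto X₁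
  set ρregS : Representation ℂ ↥S (↥S →₀ ℂ) := finRep ℂ ↥S ↥S with hρregS
  set φ : (↥S →₀ ℂ) →ₗ[ℂ] X₁ := Finsupp.linearCombination ℂ (fun s : ↥S => ρ₁ s x₀) with hφ
  have hφsingle : ∀ s : ↥S, φ (Finsupp.single s 1) = ρ₁ s x₀ := by
    intro s
    rw [hφ, Finsupp.linearCombination_single, one_smul]
  have hφequiv : ∀ (t : ↥S) f, φ (ρregS t f) = ρ₁ t (φ f) := by
    intro t f
    rw [hρregS, finRep_def, Finsupp.lmapDomain_apply, hφ,
      Finsupp.linearCombination_mapDomain]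
    rw [Finsupp.linearCombination_apply, Finsupp.linearCombination_apply, map_finsuppSum]
    rw [Finsupp.sum, Finsupp.sum]
    apply Finset.sum_congr rfl
    intro s _
    rw [map_smul]
    congr 1
    show ρ₁ (t * s) x₀ = ρ₁ t (ρ₁ s x₀)
    rw [map_mul]
    rfl
  have hφsurj : Function.Surjective φ := by
    have hrange : IsInv ρ₁ (LinearMap.range φ) := by
      rintro g v ⟨f, rfl⟩
      exact ⟨ρregS g f, hφequiv g f⟩
    have hrne : LinearMap.range φ ≠ ⊥ := by
      intro h
      have h1 : φ (Finsupp.single 1 1) = 0 := by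
        have : φ (Finsupp.single 1 1) ∈ (⊥ : Submodule ℂ X₁) := h ▸ LinearMap.mem_range_self _ _
        simpa using this
      rw [hφsingle, map_one] at h1
      exact hx₀ h1
    -- X₁ is irreducible as a module over itself via minimality
    have := isIrred_res X.rep X₁ hX₁inv hX₁ne (fun q h1 h2 h3 => hX₁min q h1 h2 h3)
    rcases this.2 (LinearMap.range φ) (fun g v hv => hrange g v hv) with h | h
    · exact absurd h hrne
    · intro x
      have : x ∈ LinearMap.range φ := h ▸ Submodule.mem_top
      exact this
  -- Maschke complement of the kernel and the resulting embedding j₀ : X₁ → ℂ[S]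
  have hkerinv : IsInv ρregS (LinearMap.ker φ) := by
    intro g v hv
    simp only [LinearMap.mem_ker] at hv ⊢
    rw [hφequiv, hv, map_zero]
  obtain ⟨C₀, hC₀inv, hC₀compl⟩ := maschke ρregS (LinearMap.ker φ) hkerinv
  set ψ : C₀ →ₗ[ℂ] X₁ := φ ∘ₗ C₀.subtype with hψ
  have hψinj : Function.Injective ψ := by
    intro a b hab
    have hmem : ((a : ↥S →₀ ℂ) - b) ∈ LinearMap.ker φ := by
      simp only [LinearMap.mem_ker, map_sub]
      have h6 : φ (a : ↥S →₀ ℂ) = φ (b : ↥S →₀ ℂ) := hab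
      rw [h6, sub_self]
    have hmem2 : ((a : ↥S →₀ ℂ) - b) ∈ C₀ := Submodule.sub_mem _ a.2 b.2
    have h7 : ((a : ↥S →₀ ℂ) - b) ∈ LinearMap.ker φ ⊓ C₀ := ⟨hmem, hmem2⟩
    rw [hC₀compl.inf_eq_bot] at h7
    exact Subtype.ext (sub_eq_zero.mp (by simpa using h7))
  have hψsurj : Function.Surjective ψ := by
    intro x
    obtain ⟨f, rfl⟩ := hφsurj x
    have hf : f ∈ LinearMap.ker φ ⊔ C₀ := by
      rw [hC₀compl.sup_eq_top]
      exact Submodule.mem_top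
    obtain ⟨k, hk, c, hc, rfl⟩ := Submodule.mem_sup.mp hf
    refine ⟨⟨c, hc⟩, ?_⟩
    show φ c = φ (k + c)
    rw [map_add, (show φ k = 0 from hk), zero_add]
  set e₀ : C₀ ≃ₗ[ℂ] X₁ := LinearEquiv.ofBijective ψ ⟨hψinj, hψsurj⟩ with he₀
  set j₀ : X₁ →ₗ[ℂ] (↥S →₀ ℂ) := C₀.subtype ∘ₗ (e₀.symm : X₁ →ₗ[ℂ] C₀) with hj₀
  have hj₀inj : Function.Injective j₀ := by
    intro a b hab
    have := Subtype.ext (α := (↥S →₀ ℂ)) (p := (· ∈ C₀)) hab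
    exact e₀.symm.injective (by exact Subtype.ext (by simpa [hj₀] using hab))
  have hψe₀ : ∀ x : X₁, ψ (e₀.symm x) = x := fun x => e₀.apply_symm_apply x
  have hj₀equiv : ∀ (t : ↥S) (x : X₁), j₀ (ρ₁ t x) = ρregS t (j₀ x) := by
    intro t x
    have h1 : ρregS t ((e₀.symm x : C₀) : ↥S →₀ ℂ) ∈ C₀ := hC₀inv t _ (e₀.symm x).2
    have h2 : e₀.symm (ρ₁ t x) = ⟨ρregS t ((e₀.symm x : C₀) : ↥S →₀ ℂ), h1⟩ := by
      apply e₀.injective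
      rw [e₀.apply_symm_apply]
      show ρ₁ t x = φ (ρregS t ((e₀.symm x : C₀) : ↥S →₀ ℂ))
      rw [hφequiv]
      congr 1
      exact (hψe₀ x).symm
    simp only [hj₀, LinearMap.comp_apply, Submodule.coe_subtype, LinearEquiv.coe_coe]
    rw [h2]
  -- the inclusion of ℂ[S] into ℂ[G]
  set ρG : Representation ℂ G (G →₀ ℂ) := finRep ℂ G G with hρG
  set j₁ : (↥S →₀ ℂ) →ₗ[ℂ] (G →₀ ℂ) := Finsupp.lmapDomain ℂ ℂ (Subtype.val : ↥S → G) with hj₁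
  have hj₁inj : Function.Injective j₁ := by
    rw [hj₁]
    intro a b hab
    simp only [Finsupp.lmapDomain_apply] at hab
    exact Finsupp.mapDomain_injective Subtype.coe_injective hab
  have hj₁equiv : ∀ (t : ↥S) f, j₁ (ρregS t f) = ρG (t : G) (j₁ f) := by
    intro t f
    rw [hj₁, hρregS, hρG, finRep_def, finRep_def]
    simp only [Finsupp.lmapDomain_apply]
    rw [← Finsupp.mapDomain_comp, ← Finsupp.mapDomain_comp]
    congr 1
  set j : X₁ →ₗ[ℂ] (G →₀ ℂ) := j₁ ∘ₗ j₀ with hj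
  have hjinj : Function.Injective j := by
    intro a b hab
    exact hj₀inj (hj₁inj (by simpa [hj] using hab))
  have hjequiv : ∀ (t : ↥S) (x : X₁), j (ρ₁ t x) = ρG (t : G) (j x) := by
    intro t x
    simp only [hj, LinearMap.comp_apply]
    rw [hj₀equiv, hj₁equiv]
  set Xt : Submodule ℂ (G →₀ ℂ) := LinearMap.range j with hXt
  have hXtne : Xt ≠ ⊥ := by
    intro h
    have : j x₀ ∈ (⊥ : Submodule ℂ (G →₀ ℂ)) := h ▸ LinearMap.mem_range_self _ _
    have h2 : j x₀ = 0 := by simpa using this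
    exact hx₀ (hjinj (by rw [h2, map_zero]))
  -- maximal invariant complement to Xt
  obtain ⟨C, ⟨hCinv, hCdisj⟩, hCmax⟩ := exists_maximal_inv ρG Xt
  obtain ⟨D, hDinv, hDcompl⟩ := maschke ρG C hCinv
  have hdecomp : ∀ w : G →₀ ℂ, ∃ c ∈ C, ∃ d ∈ D, w = c + d := by
    intro w
    have : w ∈ C ⊔ D := by rw [hDcompl.sup_eq_top]; exact Submodule.mem_top
    obtain ⟨c, hc, d, hd, rfl⟩ := Submodule.mem_sup.mp this
    exact ⟨c, hc, d, hd, rfl⟩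
  set πD := Submodule.linearProjOfIsCompl D C hDcompl.symm with hπD
  set π : (G →₀ ℂ) →ₗ[ℂ] (G →₀ ℂ) := D.subtype ∘ₗ πD with hπ
  have hπD1 : ∀ d ∈ D, π d = d := by
    intro d hd
    simp only [hπ, LinearMap.comp_apply, Submodule.coe_subtype]
    rw [show πD d = ⟨d, hd⟩ from Submodule.linearProjOfIsCompl_apply_left hDcompl.symm ⟨d, hd⟩]
  have hπD0 : ∀ c ∈ C, π c = 0 := by
    intro c hc
    simp only [hπ, LinearMap.comp_apply, Submodule.coe_subtype]
    rw [show πD c = 0 from Submodule.linearProjOfIsCompl_apply_right hDcompl.symm ⟨c, hc⟩]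
    rfl
  have hπmem : ∀ w, π w ∈ D := fun w => (πD w).2
  have hπeq : ∀ w, ∀ c ∈ C, ∀ d ∈ D, w = c + d → π w = d := by
    intro w c hc d hd hw
    rw [hw, map_add, hπD0 c hc, hπD1 d hd, zero_add]
  have hπker : ∀ w, π w = 0 → w ∈ C := by
    intro w h0
    obtain ⟨c, hc, d, hd, hw⟩ := hdecomp w
    have := hπeq w c hc d hd hw
    rw [h0] at this
    rw [hw, ← this, add_zero]
    exact hc
  have hπequiv : ∀ (g : G) w, π (ρG g w) = ρG g (π w) := by
    intro g w
    obtain ⟨c, hc, d, hd, hw⟩ := hdecomp w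
    have h1 : ρG g w = ρG g c + ρG g d := by rw [hw, map_add]
    rw [hπeq (ρG g w) (ρG g c) (hCinv g c hc) (ρG g d) (hDinv g d hd) h1,
      hπeq w c hc d hd hw]
  -- D is nonzero
  have hDne : D ≠ ⊥ := by
    intro h
    have hCtop : C = ⊤ := by
      have := hDcompl.sup_eq_top
      rw [h, sup_bot_eq] at this
      exact this
    apply hXtne
    rw [← hCdisj, hCtop, top_inf_eq]
  -- minimal invariant subspace of D
  obtain ⟨V₀, hV₀inv, hV₀ne, hV₀le, hV₀min⟩ := exists_minimal_inv ρG D hDinv hDne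
  -- every nonzero invariant subspace of D meets π(Xt)
  have hmeet : ∃ x ∈ Xt, π x ∈ V₀ ∧ π x ≠ 0 := by
    by_contra hno
    push_neg at hno
    have hC' : IsInv ρG (C ⊔ V₀) := fun g v hv => by
      obtain ⟨c, hc, v', hv', rfl⟩ := Submodule.mem_sup.mp hv
      rw [map_add]
      exact Submodule.add_mem_sup (hCinv g c hc) (hV₀inv g v' hv')
    have hC'disj : (C ⊔ V₀) ⊓ Xt = ⊥ := by
      rw [eq_bot_iff]
      rintro w ⟨hw1, hw2⟩
      obtain ⟨c, hc, v', hv', rfl⟩ := Submodule.mem_sup.mp hw1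
      have hπw : π (c + v') = v' := hπeq _ c hc v' (hV₀le hv') rfl
      have hv'0 : v' = 0 := by
        by_contra hv'0
        exact hv'0 (by
          have := hno (c + v') hw2
          rw [hπw] at this
          exact this hv')
      rw [hv'0, add_zero]
      have : c + 0 ∈ C := by simpa using hc
      have hcc : c ∈ C ⊓ Xt := ⟨hc, by rw [hv'0, add_zero] at hw2; exact hw2⟩
      rw [hCdisj] at hcc
      simpa [hv'0] using hcc
    have heq := hCmax (C ⊔ V₀) hC' hC'disj le_sup_left
    have hV₀nt : Nontrivial V₀ := nontrivial_of_ne_bot hV₀ne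
    obtain ⟨v₀, hv₀⟩ := exists_ne (0 : V₀)
    have hv₀C : (v₀ : G →₀ ℂ) ∈ C := by
      rw [← heq]
      exact Submodule.mem_sup_right v₀.2
    have : (v₀ : G →₀ ℂ) ∈ C ⊓ D := ⟨hv₀C, hV₀le v₀.2⟩
    rw [(disjoint_iff_inf_le.mp hDcompl.disjoint).antisymm bot_le] at this
    exact hv₀ (Subtype.ext (by simpa using this))
  obtain ⟨xt, hxtXt, hπxtV₀, hπxtne⟩ := hmeet
  -- the irreducible representation W on V₀
  have hirr := isIrred_res ρG V₀ hV₀inv hV₀ne (fun q h1 h2 h3 => hV₀min q h1 h2 h3)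
  refine ⟨⟨V₀, resRep ρG V₀ hV₀inv⟩, ⟨hirr.1, hirr.2⟩, ?_⟩
  intro P hPS hNFX
  have hNFX₁ : NFon ρ₁ (fun s : ↥S => P (s : G)) := NFon_res X₁ hX₁inv hNFX
  obtain ⟨x, hxj⟩ := hxtXt
  have hxne : x ≠ 0 := by
    intro h0
    apply hπxtne
    rw [← hxj, h0, map_zero, map_zero]
  obtain ⟨s, hPs, hsx⟩ := hNFX₁ x hxne
  refine ⟨⟨π xt, hπxtV₀⟩, (s : G), hPs, ?_⟩
  intro heq
  -- heq : ρG s (π xt) = π xt  (at the subtype level)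
  have heq' : ρG (s : G) (π xt) = π xt := congrArg Subtype.val heq
  apply hsx
  -- show ρ₁ s x = x
  have h1 : π (ρG (s : G) xt) = π xt := by rw [hπequiv, heq']
  have h2 : ρG (s : G) xt = j (ρ₁ s x) := by rw [hjequiv, hxj]
  have h3 : ρG (s : G) xt - xt ∈ C := by
    apply hπker
    rw [map_sub, h1, sub_self]
  have h4 : ρG (s : G) xt - xt ∈ Xt := by
    rw [h2, ← hxj, ← map_sub]
    exact LinearMap.mem_range_self _ _
  have h5 : ρG (s : G) xt - xt = 0 := by
    have : ρG (s : G) xt - xt ∈ C ⊓ Xt := ⟨h3, h4⟩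
    rw [hCdisj] at this
    simpa using this
  apply hjinj
  rw [← h2, hxj]
  exact sub_eq_zero.mp h5

end Constituent2

section Step

variable {G : Type} [Group G] [Finite G]

/-- kernel of a bundled representation -/
def repKer (W : BRep G) : Subgroup G where
  carrier := {g | ∀ v : W.carrier, W.rep g v = v}
  one_mem' := by
    intro v
    rw [map_one]
    rfl
  mul_mem' := by
    intro a b ha hb v
    rw [map_mul]
    show W.rep a (W.rep b v) = v
    rw [hb v, ha v]
  inv_mem' := by
    intro a ha v
    calc W.rep a⁻¹ v = W.rep a⁻¹ (W.rep a v) := by rw [ha v]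
      _ = W.rep (a⁻¹ * a) v := by rw [map_mul]; rfl
      _ = v := by rw [inv_mul_cancel, map_one]; rfl

lemma mem_repKer {W : BRep G} {g : G} : g ∈ repKer W ↔ ∀ v : W.carrier, W.rep g v = v :=
  Iff.rfl

lemma repKer_conj (W : BRep G) (g n : G) (hn : n ∈ repKer W) : g * n * g⁻¹ ∈ repKer W := by
  intro v
  have h1 : W.rep (g * n * g⁻¹) v = W.rep g (W.rep n (W.rep g⁻¹ v)) := by
    rw [map_mul, map_mul]
    rfl
  rw [h1, hn (W.rep g⁻¹ v)]
  calc W.rep g (W.rep g⁻¹ v) = W.rep (g * g⁻¹) v := by rw [map_mul]; rfl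
    _ = v := by rw [mul_inv_cancel, map_one]; rfl

/-- The key step: given a distributive interval `[Hs, K]` and a normal subgroup `N` of `G`
with `N ⊓ Hs = ⊥`, there is an irreducible representation of `G` whose kernel intersected
with `N` and `K` is trivial. -/
lemma step (K Hs N : Subgroup G) (hHsK : Hs ≤ K)
    (hNnormal : ∀ g : G, ∀ n ∈ N, g * n * g⁻¹ ∈ N)
    (hdisj : N ⊓ Hs = ⊥)
    (hdist : ∀ x y z : Subgroup G, Hs ≤ x → x ≤ K → Hs ≤ y → y ≤ K → Hs ≤ z → z ≤ K →
      x ⊓ (y ⊔ z) = (x ⊓ y) ⊔ (x ⊓ z)) :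
    ∃ W : BRep G, IsIrredRep W.rep ∧ (N ⊓ repKer W) ⊓ K = ⊥ := by
  classical
  set N₀ : Subgroup G := N ⊓ K with hN₀
  by_cases hN₀bot : N₀ = ⊥
  · -- trivial case: any irreducible representation will do
    obtain ⟨W, hWirr, _⟩ := constituent (⊥ : Subgroup G) ⟨ℂ, 1⟩ inferInstance
    refine ⟨W, hWirr, ?_⟩
    rw [eq_bot_iff, ← hN₀bot, hN₀]
    rintro g ⟨⟨hg1, _⟩, hg3⟩
    exact ⟨hg1, hg3⟩
  · have hN₀K : N₀ ≤ K := inf_le_right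
    have hN₀N : N₀ ≤ N := inf_le_left
    have hN₀normal : IsNormalIn K N₀ := by
      refine ⟨inf_le_right, fun k hk m hm => ⟨?_, ?_⟩⟩
      · exact hNnormal k m hm.1
      · exact K.mul_mem (K.mul_mem hk (hN₀K hm)) (K.inv_mem hk)
    have hdisj' : Hs ⊓ N₀ = ⊥ := by
      rw [eq_bot_iff]
      rintro g ⟨hg1, hg2⟩
      rw [← hdisj]
      exact ⟨hN₀N hg2, hg1⟩
    -- the set of minimal K-normal subgroups contained in N₀
    set ℳ : Set (Subgroup G) := {M | M ≤ N₀ ∧ IsNormalIn K M ∧ M ≠ ⊥ ∧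
      ∀ P, IsNormalIn K P → P ≠ ⊥ → P ≤ M → P = M} with hℳ
    set T : Finset (Subgroup G) := (Set.toFinite ℳ).toFinset with hT
    have hTmem : ∀ M, M ∈ T ↔ M ∈ ℳ := fun M => Set.Finite.mem_toFinset _
    -- pairwise disjointness
    have hpair : ∀ M ∈ ℳ, ∀ M' ∈ ℳ, M ≠ M' → M ⊓ M' = ⊥ := by
      intro M hM M' hM' hne
      by_contra hbot'
      have h1 := hM.2.2.2 (M ⊓ M') (hM.2.1.inf hM'.2.1) hbot' inf_le_left
      have h2 := hM'.2.2.2 (M ⊓ M') (hM.2.1.inf hM'.2.1) hbot' inf_le_right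
      exact hne (h1.symm.trans h2)
    -- hypotheses for agg
    have hbotT : ∀ M ∈ T, M ≠ ⊥ := fun M hM => ((hTmem M).mp hM).2.2.1
    have hcommT : ∀ M ∈ T, ∀ M' ∈ T, M ≠ M' → ∀ m ∈ M, ∀ m' ∈ M', m * m' = m' * m := by
      intro M hM M' hM' hne
      exact commute_of_disjoint_normal ((hTmem M).mp hM).2.1 ((hTmem M').mp hM').2.1
        (hpair M ((hTmem M).mp hM) M' ((hTmem M').mp hM') hne)
    have hindepT : ∀ M ∈ T, ∀ T' ⊆ T, M ∉ T' → M ⊓ T'.sup id = ⊥ := by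
      intro M hM T' hT' hMnot
      have hMℳ := (hTmem M).mp hM
      apply finset_indep hHsK hN₀K hdisj' hdist T' M hMℳ.1 (hMℳ.2.1.cinv hHsK)
      intro M' hM'
      have hM'ℳ := (hTmem M').mp (hT' hM')
      refine ⟨hM'ℳ.1, hM'ℳ.2.1.cinv hHsK, ?_⟩
      exact hpair M hMℳ M' hM'ℳ (fun h => hMnot (h ▸ hM'))
    -- T is nonempty since N₀ is a nontrivial K-normal subgroup
    obtain ⟨M₁, hM₁le, hM₁n, hM₁ne, hM₁min⟩ := exists_minimal_normalin hN₀normal hN₀bot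
    -- aggregate
    obtain ⟨Wag, hWagnt, hWagNF⟩ := agg T hbotT hcommT hindepT
    obtain ⟨W, hWirr, hWtransfer⟩ := constituent (T.sup id) Wag hWagnt
    refine ⟨W, hWirr, ?_⟩
    by_contra hDne
    set D : Subgroup G := (N ⊓ repKer W) ⊓ K with hD
    have hDN₀ : D ≤ N₀ := by
      rintro g ⟨⟨hg1, _⟩, hg3⟩
      exact ⟨hg1, hg3⟩
    have hDnormal : IsNormalIn K D := by
      refine ⟨inf_le_right, fun k hk m hm => ⟨⟨?_, ?_⟩, ?_⟩⟩
      · exact hNnormal k m hm.1.1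
      · exact repKer_conj W k m hm.1.2
      · exact K.mul_mem (K.mul_mem hk hm.2) (K.inv_mem hk)
    obtain ⟨M, hMle, hMn, hMne, hMmin⟩ := exists_minimal_normalin hDnormal hDne
    have hMℳ : M ∈ ℳ := ⟨hMle.trans hDN₀, hMn, hMne, hMmin⟩
    have hMT : M ∈ T := (hTmem M).mpr hMℳ
    have hMS : M ≤ T.sup id := by
      have := Finset.le_sup (f := id) hMT
      exact this
    obtain ⟨v, g, hgM, hgv⟩ := hWtransfer (fun g => g ∈ M) (fun g hg => hMS hg)
      (hWagNF M hMT)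
    apply hgv
    have hgker : g ∈ repKer W := (hMle hgM).1.2
    exact hgker v

end Step

end DC

/-- If a finite group `G` has a chain `{e} = H_0 < H_1 < ⋯ < H_ℓ = G` of subgroups with
each interval `[H_i, H_{i+1}]` distributive, then `G` has a faithful complex
representation which is a direct sum of at most `ℓ` irreducible representations. -/
theorem faithful_rep_of_distributive_chain {G : Type} [Group G] [Finite G] (ℓ : ℕ)
    (H : Fin (ℓ + 1) → Subgroup G)
    (h0 : H 0 = ⊥) (hlast : H (Fin.last ℓ) = ⊤)
    (hlt : ∀ i : Fin ℓ, H i.castSucc < H i.succ)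
    (hdist : ∀ i : Fin ℓ, ∀ x y z : Subgroup G,
      H i.castSucc ≤ x → x ≤ H i.succ → H i.castSucc ≤ y → y ≤ H i.succ →
      H i.castSucc ≤ z → z ≤ H i.succ → x ⊓ (y ⊔ z) = (x ⊓ y) ⊔ (x ⊓ z)) :
    ∃ n : ℕ, n ≤ ℓ ∧ ∃ V : Fin n → FDRep ℂ G,
      (∀ i, IsIrredRep (V i).ρ) ∧
      Function.Injective ⇑(piRep fun i => (V i).ρ) := by
  classical
  have main : ∀ i : ℕ, ∀ hi : i ≤ ℓ, ∃ V : Fin i → DC.BRep G,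
      (∀ j, IsIrredRep (V j).rep) ∧
      ((⨅ j, DC.repKer (V j)) ⊓ H ⟨i, Nat.lt_succ_of_le hi⟩ = ⊥) := by
    intro i
    induction i with
    | zero =>
      intro hi
      refine ⟨Fin.elim0, fun j => j.elim0, ?_⟩
      have h1 : (⟨0, Nat.lt_succ_of_le hi⟩ : Fin (ℓ+1)) = 0 := rfl
      rw [h1, h0]
      simp
    | succ i ih =>
      intro hi
      have hile : i ≤ ℓ := Nat.le_of_succ_le hi
      obtain ⟨V, hVirr, hVker⟩ := ih hile
      set N : Subgroup G := ⨅ j, DC.repKer (V j) with hN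
      have hNnormal : ∀ g : G, ∀ n ∈ N, g * n * g⁻¹ ∈ N := by
        intro g n hn
        rw [hN, Subgroup.mem_iInf] at hn ⊢
        intro j
        exact DC.repKer_conj (V j) g n (hn j)
      set ifin : Fin ℓ := ⟨i, Nat.lt_of_succ_le hi⟩ with hifin
      have hidx1 : H ifin.castSucc = H ⟨i, Nat.lt_succ_of_le hile⟩ := by
        congr 1
      have hidx2 : H ifin.succ = H ⟨i + 1, Nat.lt_succ_of_le hi⟩ := by
        congr 1
      have hdisjN : N ⊓ H ifin.castSucc = ⊥ := by
        rw [hidx1]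
        exact hVker
      obtain ⟨W, hWirr, hWker⟩ := DC.step (H ifin.succ) (H ifin.castSucc) N
        (hlt ifin).le hNnormal hdisjN (hdist ifin)
      set Vnew : Fin (i+1) → DC.BRep G := Fin.snoc V W with hVnew
      have hVnewcast : ∀ j : Fin i, Vnew j.castSucc = V j := by
        intro j
        rw [hVnew]
        exact Fin.snoc_castSucc _ _ _
      have hVnewlast : Vnew (Fin.last i) = W := by
        rw [hVnew]
        exact Fin.snoc_last _ _
      have hsnocinf : (⨅ j : Fin (i+1), DC.repKer (Vnew j)) = N ⊓ DC.repKer W := by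
        apply le_antisymm
        · apply le_inf
          · rw [hN]
            apply le_iInf
            intro j
            refine (iInf_le _ j.castSucc).trans (le_of_eq ?_)
            rw [hVnewcast]
          · refine (iInf_le _ (Fin.last i)).trans (le_of_eq ?_)
            rw [hVnewlast]
        · apply le_iInf
          intro j
          induction j using Fin.lastCases with
          | last =>
            rw [hVnewlast]
            exact inf_le_right
          | cast j =>
            rw [hVnewcast]
            refine inf_le_left.trans ?_
            rw [hN]
            exact iInf_le _ j
      refine ⟨Vnew, ?_, ?_⟩
      · intro j
        induction j using Fin.lastCases with
        | last =>
          rw [hVnewlast]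
          exact hWirr
        | cast j =>
          rw [hVnewcast]
          exact hVirr j
      · rw [hsnocinf, ← hidx2]
        exact hWker
  obtain ⟨V, hVirr, hVker⟩ := main ℓ le_rfl
  have hbot : (⨅ j, DC.repKer (V j)) = ⊥ := by
    have h1 : (⟨ℓ, Nat.lt_succ_of_le le_rfl⟩ : Fin (ℓ+1)) = Fin.last ℓ := rfl
    rw [h1, hlast, inf_top_eq] at hVker
    exact hVker
  refine ⟨ℓ, le_rfl, fun j => FDRep.of (V j).rep, ?_, ?_⟩
  · intro j
    show IsIrredRep (FDRep.of (V j).rep).ρ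
    exact hVirr j
  · intro a b hab
    have key : ∀ j : Fin ℓ, ∀ v : (V j).carrier, (V j).rep a v = (V j).rep b v := by
      intro j v
      let x : ∀ i : Fin ℓ, ((fun k => FDRep.of (V k).rep) i : Type) := Pi.single j v
      have h1 := LinearMap.congr_fun hab x
      have h2 := congrFun h1 j
      have h3 : (V j).rep a (x j) = (V j).rep b (x j) := h2
      have h4 : x j = v := by simp [x]
      rwa [h4] at h3
    have hmem : b⁻¹ * a ∈ (⨅ j, DC.repKer (V j)) := by
      rw [Subgroup.mem_iInf]
      intro j
      intro v
      calc (V j).rep (b⁻¹ * a) v = (V j).rep b⁻¹ ((V j).rep a v) := by rw [map_mul]; rfl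
        _ = (V j).rep b⁻¹ ((V j).rep b v) := by rw [key j v]
        _ = (V j).rep (b⁻¹ * b) v := by rw [map_mul]; rfl
        _ = v := by rw [inv_mul_cancel, map_one]; rfl
    rw [hbot] at hmem
    have h5 : b⁻¹ * a = 1 := hmem
    have := inv_mul_eq_one.mp h5
    exact this.symm
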